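/- The genus-one condition of an enhanced twin Frobenius algebra holds with a minus sign for the algebra (A_C, A_W, z₁, z₁*, z₂, z₂*): for k = 1, 2 and every x ∈ A, z_k(m(Δ_C(z_k*(x)))) = −m(Δ_W(x)); that is, −z_k ∘ m ∘ Δ_C ∘ z_k* = m ∘ Δ_W as R-linear endomorphisms of A. -/

import Mathlib

open TensorProduct Polynomial

noncomputable section

variable {R : Type*} [CommRing R]

/-- The algebra `A = R[X]/(X² - h·X - a)`. -/
abbrev FrobA (a h : R) : Type _ := AdjoinRoot (X ^ 2 - C h * X - C a)

/-- The image of the variable `X` in `A`. -/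
abbrev FrobX (a h : R) : FrobA a h := AdjoinRoot.root _

/-- the genus-one condition holds with a minus sign:
`z_k(m(Δ_C(z_k*(x)))) = -m(Δ_W(x))` for `k = 1, 2`, where `Δ_W = i•Δ_C`. -/
theorem genus_one_minus_sign (a h i : R) (hi : i ^ 2 = -1)
    (ΔC : FrobA a h →ₗ[R] FrobA a h ⊗[R] FrobA a h)
    (hΔ1 : ΔC 1 = (1 : FrobA a h) ⊗ₜ[R] FrobX a h + FrobX a h ⊗ₜ[R] (1 : FrobA a h)
      - h • ((1 : FrobA a h) ⊗ₜ[R] (1 : FrobA a h)))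
    (hΔX : ΔC (FrobX a h) = FrobX a h ⊗ₜ[R] FrobX a h
      + a • ((1 : FrobA a h) ⊗ₜ[R] (1 : FrobA a h)))
    (z1 z1s z2 z2s : FrobA a h →ₗ[R] FrobA a h)
    (hz1 : z1 = LinearMap.id)
    (hz1s : ∀ x : FrobA a h, z1s x = (-i) • x)
    (hz21 : z2 1 = 1)
    (hz2X : z2 (FrobX a h) = algebraMap R (FrobA a h) h - FrobX a h)
    (hz2s1 : z2s 1 = i • (1 : FrobA a h))
    (hz2sX : z2s (FrobX a h) = i • (algebraMap R (FrobA a h) h - FrobX a h)) :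
    (∀ x : FrobA a h,
      z1 (LinearMap.mul' R (FrobA a h) (ΔC (z1s x))) =
        -(LinearMap.mul' R (FrobA a h) ((i • ΔC) x))) ∧
    (∀ x : FrobA a h,
      z2 (LinearMap.mul' R (FrobA a h) (ΔC (z2s x))) =
        -(LinearMap.mul' R (FrobA a h) ((i • ΔC) x))) := by
  have hmonic : (X ^ 2 - C h * X - C a : R[X]).Monic := by
    have heq : (X ^ 2 - C h * X - C a : R[X]) = X ^ 2 - (C h * X + C a) := by ring
    rw [heq]
    apply monic_X_pow_sub
    have hle : (C h * X + C a : R[X]).degree ≤ 1 := by compute_degree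
    exact lt_of_le_of_lt hle (by norm_num)
  -- the defining relation of the root
  have hroot : FrobX a h * FrobX a h = h • FrobX a h + a • (1 : FrobA a h) := by
    have h0 := AdjoinRoot.mk_self (f := (X ^ 2 - C h * X - C a : R[X]))
    have : (FrobX a h) ^ 2 - AdjoinRoot.of _ h * FrobX a h - AdjoinRoot.of _ a = 0 := by
      simpa [map_sub, map_mul, map_pow] using h0
    have h1 : (FrobX a h) ^ 2 = AdjoinRoot.of _ h * FrobX a h + AdjoinRoot.of _ a := by
      linear_combination this
    calc FrobX a h * FrobX a h = (FrobX a h) ^ 2 := by ring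
      _ = h • FrobX a h + a • (1 : FrobA a h) := by
          rw [h1, Algebra.smul_def, Algebra.smul_def, mul_one]; rfl
  -- spanning set
  have hspan : ∀ x : FrobA a h,
      x ∈ Submodule.span R {(1 : FrobA a h), FrobX a h} := by
    rcases subsingleton_or_nontrivial R with hR | hR
    · have : Subsingleton (FrobA a h) := Module.subsingleton R _
      intro x
      rw [Subsingleton.elim x 0]
      exact Submodule.zero_mem _
    · intro x
      set pb := AdjoinRoot.powerBasis' hmonic with hpb
      have hx := Module.Basis.mem_span pb.basis x
      refine Submodule.span_le.mpr ?_ hx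
      rintro _ ⟨k, rfl⟩
      have hk : pb.basis k = pb.gen ^ (k : ℕ) := pb.basis_eq_pow k
      have hgen : pb.gen = FrobX a h := AdjoinRoot.powerBasis'_gen hmonic
      have hdim : pb.dim = 2 := by
        show (X ^ 2 - C h * X - C a : R[X]).natDegree = 2
        compute_degree!
      have hklt : (k : ℕ) < 2 := by have h2 := k.isLt; omega
      interval_cases hkk : (k : ℕ) <;> simp [hk, hkk, hgen] <;>
        exact Submodule.subset_span (by simp)
  -- multiplication values
  have m1 : LinearMap.mul' R (FrobA a h) (ΔC 1)
      = FrobX a h + FrobX a h - h • (1 : FrobA a h) := by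
    rw [hΔ1]; simp [map_sub, map_add, map_smul, LinearMap.mul'_apply]
  have mX : LinearMap.mul' R (FrobA a h) (ΔC (FrobX a h))
      = h • FrobX a h + a • (1 : FrobA a h) + a • (1 : FrobA a h) := by
    rw [hΔX]; simp [map_add, map_smul, LinearMap.mul'_apply, hroot]
  have halg : algebraMap R (FrobA a h) h = h • (1 : FrobA a h) := by
    rw [Algebra.smul_def, mul_one]
  constructor
  · intro x
    simp only [hz1, LinearMap.id_coe, id_eq, hz1s, neg_smul, map_neg, map_smul,
      LinearMap.smul_apply]
  · intro x
    refine Submodule.span_induction ?_ ?_ ?_ ?_ (hspan x)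
    · rintro y (rfl | rfl)
      · simp only [hz2s1, halg, map_smul, map_sub, map_add, LinearMap.smul_apply,
          m1, mX, hz21, hz2X, smul_sub, smul_add]
        module
      · simp only [hz2sX, halg, map_smul, map_sub, map_add, LinearMap.smul_apply,
          m1, mX, hz21, hz2X, smul_sub, smul_add]
        module
    · simp
    · intro y z _ _ hy hz
      simp only [map_add, LinearMap.smul_apply] at *
      rw [hy, hz]; abel
    · intro r y _ hy
      simp only [map_smul, LinearMap.smul_apply] at *
      rw [hy]; module

end
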